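/- Let G=(V,E) be a finite simple graph with |E| ≥ 1 and let K be a field. Then the cut ideal I_G is the zero ideal (equivalently, the cut algebra K[G] is isomorphic to a polynomial ring over K) if and only if G is the complete graph K_2 on two vertices or the complete graph K_3 on three vertices. -/

import Mathlib

open scoped Classical

noncomputable section

namespace CutPaper

open MvPolynomial

/-- An edge `e` is cut by the partition `A | Aᶜ` if it has exactly one endpoint in `A`. -/
def IsCutEdge {V : Type} (A : Set V) (e : Sym2 V) : Prop :=
  ∃ u v : V, e = s(u, v) ∧ u ∈ A ∧ v ∉ A

/-- The cut set of `A`: all edges of `G` with exactly one endpoint in `A`. -/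
def cutSet {V : Type} (G : SimpleGraph V) (A : Set V) : Set (Sym2 V) :=
  {e ∈ G.edgeSet | IsCutEdge A e}

lemma isCutEdge_compl {V : Type} (A : Set V) (e : Sym2 V) :
    IsCutEdge Aᶜ e ↔ IsCutEdge A e := by
  constructor <;> rintro ⟨u, v, rfl, hu, hv⟩
  · exact ⟨v, u, Sym2.eq_swap, Set.notMem_compl_iff.mp hv, hu⟩
  · exact ⟨v, u, Sym2.eq_swap, hv, not_not_intro hu⟩

/-- Two subsets determine the same unordered partition `A | Aᶜ` of `V`
iff they are equal or complementary. -/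
def partitionSetoid (V : Type) : Setoid (Set V) where
  r A B := B = A ∨ B = Aᶜ
  iseqv := by
    refine ⟨fun A => Or.inl rfl, @fun A B h => ?_, @fun A B C h1 h2 => ?_⟩
    · rcases h with rfl | rfl
      · exact Or.inl rfl
      · exact Or.inr (compl_compl A).symm
    · rcases h1 with rfl | rfl <;> rcases h2 with rfl | rfl
      · exact Or.inl rfl
      · exact Or.inr rfl
      · exact Or.inr rfl
      · exact Or.inl (compl_compl A)

/-- The unordered partitions `A | Aᶜ` of `V`, indexing the variables of `S_G`. -/
abbrev Partition (V : Type) := Quotient (partitionSetoid V)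

variable (K : Type) [CommRing K]

/-- The variable `q_{A|Aᶜ}` of the polynomial ring `S_G`. -/
def qPart {V : Type} (A : Set V) : MvPolynomial (Partition V) K :=
  X (Quotient.mk (partitionSetoid V) A)

/-- The monomial `u_A = ∏_{e ∈ Cut(A)} s_e · ∏_{e ∈ E \ Cut(A)} t_e`;
the variable `s_e` is `X (true, e)` and `t_e` is `X (false, e)`. -/
def cutMonomial {V : Type} [Finite V] (G : SimpleGraph V) (A : Set V) :
    MvPolynomial (Bool × Sym2 V) K :=
  ∏ e ∈ (Set.toFinite G.edgeSet).toFinset,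
    if IsCutEdge A e then X (true, e) else X (false, e)

lemma cutMonomial_compl {V : Type} [Finite V] (G : SimpleGraph V) (A : Set V) :
    cutMonomial K G Aᶜ = cutMonomial K G A := by
  unfold cutMonomial
  refine Finset.prod_congr rfl fun e _ => ?_
  by_cases h : IsCutEdge A e
  · rw [if_pos ((isCutEdge_compl A e).mpr h), if_pos h]
  · rw [if_neg fun hc => h ((isCutEdge_compl A e).mp hc), if_neg h]

/-- The `K`-algebra homomorphism `φ_G : S_G → R_G`, `q_{A|Aᶜ} ↦ u_A`. -/
def phi {V : Type} [Finite V] (G : SimpleGraph V) :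
    MvPolynomial (Partition V) K →ₐ[K] MvPolynomial (Bool × Sym2 V) K :=
  aeval fun p : Partition V =>
    Quotient.lift (cutMonomial K G)
      (fun A B hAB => by
        have h : B = A ∨ B = Aᶜ := hAB
        rcases h with rfl | rfl
        · rfl
        · exact (cutMonomial_compl K G A).symm) p

/-- The cut ideal `I_G = ker φ_G`. -/
def cutIdeal {V : Type} [Finite V] (G : SimpleGraph V) :
    Ideal (MvPolynomial (Partition V) K) :=
  RingHom.ker (phi K G)

/-- The cut algebra `K[G]`, i.e. the image of `φ_G`: the `K`-subalgebra of `R_G`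
generated by the monomials `u_A`. -/
def cutAlgebra {V : Type} [Finite V] (G : SimpleGraph V) :
    Subalgebra K (MvPolynomial (Bool × Sym2 V) K) :=
  Algebra.adjoin K {m | ∃ A : Set V, m = cutMonomial K G A}

/-- The generator `u_A` of the cut algebra, as an element of the cut algebra. -/
def uGen {V : Type} [Finite V] (G : SimpleGraph V) (A : Set V) : ↥(cutAlgebra K G) :=
  ⟨cutMonomial K G A, Algebra.subset_adjoin ⟨A, rfl⟩⟩

/-- An element of `S_G/I` is homogeneous of degree `d` if it is the class of a homogeneous
polynomial of degree `d`. -/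
def QuotHomogeneous {σ : Type} (I : Ideal (MvPolynomial σ K)) (d : ℕ)
    (x : MvPolynomial σ K ⧸ I) : Prop :=
  ∃ f : MvPolynomial σ K, f.IsHomogeneous d ∧ Ideal.Quotient.mk I f = x

/-- The cut algebra of `H` is an algebra retract of the cut algebra of `G`:
there are homogeneous `K`-algebra homomorphisms `ι : K[H] → K[G]` (injective) and
`π : K[G] → K[H]` with `π ∘ ι = id`. -/
def CutAlgebraRetract {V W : Type} [Finite V] [Finite W]
    (H : SimpleGraph W) (G : SimpleGraph V) : Prop :=
  ∃ (ι : (MvPolynomial (Partition W) K ⧸ cutIdeal K H) →ₐ[K]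
      (MvPolynomial (Partition V) K ⧸ cutIdeal K G))
    (π : (MvPolynomial (Partition V) K ⧸ cutIdeal K G) →ₐ[K]
      (MvPolynomial (Partition W) K ⧸ cutIdeal K H)),
    Function.Injective ι ∧
    (∀ d x, QuotHomogeneous K (cutIdeal K H) d x →
      ∃ d', QuotHomogeneous K (cutIdeal K G) d' (ι x)) ∧
    (∀ d x, QuotHomogeneous K (cutIdeal K G) d x →
      ∃ d', QuotHomogeneous K (cutIdeal K H) d' (π x)) ∧
    π.comp ι = AlgHom.id K _

/-- The graph obtained from `G` by contracting the edge `{u, v}`: the vertex `u` is removed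
and merged into `v`. -/
def contractEdge {V : Type} (G : SimpleGraph V) (u v : V) :
    SimpleGraph {x : V // x ≠ u} where
  Adj a b := a ≠ b ∧
    (G.Adj a b ∨ ((a : V) = v ∧ G.Adj u b) ∨ ((b : V) = v ∧ G.Adj a u))
  symm := by
    constructor
    rintro a b ⟨hne, h | ⟨ha, h⟩ | ⟨hb, h⟩⟩
    · exact ⟨hne.symm, Or.inl h.symm⟩
    · exact ⟨hne.symm, Or.inr (Or.inr ⟨ha, h.symm⟩)⟩
    · exact ⟨hne.symm, Or.inr (Or.inl ⟨hb, h.symm⟩)⟩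
  loopless := ⟨fun a h => h.1 rfl⟩

/-- The induced subgraph `G_W` is a neighborhood-minor of `G`: `W` and `W' = Wᶜ` are nonempty
and there is a vertex `v ∈ W` with `W ∩ N_G(W') ⊆ N_{G_W}[v]`. -/
def IsNeighborhoodMinor {V : Type} (G : SimpleGraph V) (W : Set V) : Prop :=
  W.Nonempty ∧ Wᶜ.Nonempty ∧
    ∃ v ∈ W, ∀ x ∈ W, (∃ y ∈ Wᶜ, G.Adj y x) → x = v ∨ G.Adj v x

/-- The cut vector `δ_A ∈ {0,1}^E` of the partition `A | Aᶜ`. -/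
def cutVector {V : Type} (G : SimpleGraph V) (A : Set V) : ↥G.edgeSet → ℝ :=
  fun e => if IsCutEdge A (e : Sym2 V) then 1 else 0

/-- The cut polytope `Cut^□(G) ⊆ ℝ^E`: the convex hull of the cut vectors. -/
def cutPolytope {V : Type} (G : SimpleGraph V) : Set (↥G.edgeSet → ℝ) :=
  convexHull ℝ {x | ∃ A : Set V, x = cutVector G A}

/-- `F` is a face of `P`: either a trivial face (`P` or `∅`), or the intersection of `P`
with a supporting hyperplane. -/
def IsFace {α : Type} (P F : Set (α → ℝ)) : Prop :=
  F = P ∨ F = ∅ ∨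
    ∃ (φ : (α → ℝ) →ₗ[ℝ] ℝ) (c : ℝ), φ ≠ 0 ∧
      (∀ x ∈ P, φ x ≤ c) ∧ F = P ∩ {x | φ x = c}

/-- `P` and `Q` are affinely isomorphic: there is a bijective map from `P` onto `Q`
extending to an affine map. -/
def AffinelyIsomorphic {α β : Type} (P : Set (α → ℝ)) (Q : Set (β → ℝ)) : Prop :=
  ∃ f : (α → ℝ) →ᵃ[ℝ] (β → ℝ), Set.InjOn f P ∧ f '' P = Q

/-- The monomial `z · ∏_{e ∈ Cut(A)} y_e` of the polytopal algebra of the cut polytope;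
the variable `z` is `X none` and `y_e` is `X (some e)`. -/
def polytopeMonomial {V : Type} [Finite V] (G : SimpleGraph V) (A : Set V) :
    MvPolynomial (Option (Sym2 V)) K :=
  X none * ∏ e ∈ (Set.toFinite (cutSet G A)).toFinset, X (some e)

/-- The polytopal algebra `K[Cut^□(G)]`: the subalgebra of `K[y_e (e ∈ E), z]` generated by
the monomials `z · y^{δ_A}` attached to the lattice points (= cut vectors) of `Cut^□(G)`. -/
def polytopalAlgebra {V : Type} [Finite V] (G : SimpleGraph V) :
    Subalgebra K (MvPolynomial (Option (Sym2 V)) K) :=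
  Algebra.adjoin K {m | ∃ A : Set V, m = polytopeMonomial K G A}

/-- `G'` is a combinatorial retract of `G`: it is obtained from `G` by a finite sequence of
edge contractions and neighborhood-minors. -/
inductive CombinatorialRetract : ∀ {V W : Type}, SimpleGraph V → SimpleGraph W → Prop
  | refl {V : Type} (G : SimpleGraph V) : CombinatorialRetract G G
  | contract {V W : Type} (G : SimpleGraph V) (u v : V) (huv : G.Adj u v)
      (G' : SimpleGraph W) (h : CombinatorialRetract (contractEdge G u v) G') :
      CombinatorialRetract G G'
  | nbhdMinor {V W : Type} (G : SimpleGraph V) (S : Set V)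
      (hS : IsNeighborhoodMinor G S) (G' : SimpleGraph W)
      (h : CombinatorialRetract (SimpleGraph.induce S G) G') :
      CombinatorialRetract G G'


/-! ### Helper lemmas -/

lemma prod_monomial_one {ι τ : Type} (K : Type) [CommRing K] (s : Finset ι)
    (g : ι → (τ →₀ ℕ)) :
    ∏ i ∈ s, (monomial (g i) (1 : K)) = monomial (∑ i ∈ s, g i) 1 := by
  classical
  induction s using Finset.induction with
  | empty => simp [monomial_zero', C_1]
  | insert a s h ih =>
    rw [Finset.prod_insert h, Finset.sum_insert h, ih, monomial_mul, one_mul]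

lemma isCutEdge_mk_iff {V : Type} (A : Set V) (u v : V) :
    IsCutEdge A s(u, v) ↔ (u ∈ A ∧ v ∉ A) ∨ (v ∈ A ∧ u ∉ A) := by
  constructor
  · rintro ⟨u', v', h, hu', hv'⟩
    rw [Sym2.eq_iff] at h
    rcases h with ⟨rfl, rfl⟩ | ⟨rfl, rfl⟩
    · exact Or.inl ⟨hu', hv'⟩
    · exact Or.inr ⟨hu', hv'⟩
  · rintro (⟨hu, hv⟩ | ⟨hv, hu⟩)
    · exact ⟨u, v, rfl, hu, hv⟩
    · exact ⟨v, u, Sym2.eq_swap, hv, hu⟩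

/-- The exponent vector of `cutMonomial`. -/
def cutExp {V : Type} [Finite V] (G : SimpleGraph V) (A : Set V) :
    Bool × Sym2 V →₀ ℕ :=
  ∑ e ∈ (Set.toFinite G.edgeSet).toFinset,
    Finsupp.single ((if IsCutEdge A e then true else false), e) 1

lemma cutExp_compl {V : Type} [Finite V] (G : SimpleGraph V) (A : Set V) :
    cutExp G Aᶜ = cutExp G A := by
  unfold cutExp
  refine Finset.sum_congr rfl fun e _ => ?_
  rw [isCutEdge_compl]

lemma cutMonomial_eq_monomial {V : Type} [Finite V] (K : Type) [CommRing K]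
    (G : SimpleGraph V) (A : Set V) :
    cutMonomial K G A = monomial (cutExp G A) (1 : K) := by
  unfold cutMonomial cutExp
  rw [← prod_monomial_one]
  refine Finset.prod_congr rfl fun e _ => ?_
  by_cases h : IsCutEdge A e <;> simp [h, X]

/-- The exponent vector as a function on partitions. -/
def cutExpQ {V : Type} [Finite V] (G : SimpleGraph V) : Partition V → (Bool × Sym2 V →₀ ℕ) :=
  Quotient.lift (cutExp G) (fun A B hAB => by
    have h : B = A ∨ B = Aᶜ := hAB
    rcases h with rfl | rfl
    · rfl
    · exact (cutExp_compl G A).symm)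

lemma phi_eq_aeval_monomial {V : Type} [Finite V] (K : Type) [CommRing K]
    (G : SimpleGraph V) :
    phi K G = aeval (fun p : Partition V => monomial (cutExpQ G p) (1 : K)) := by
  unfold phi
  congr 1
  funext p
  induction p using Quotient.ind with
  | _ A => exact cutMonomial_eq_monomial K G A

lemma phi_qPart {V : Type} [Finite V] (K : Type) [CommRing K]
    (G : SimpleGraph V) (A : Set V) :
    phi K G (qPart K A) = cutMonomial K G A := by
  unfold phi qPart
  rw [aeval_X]
  rfl


/-- Applying the `ℕ`-linear combination of exponent vectors at a coordinate. -/
lemma L_apply {sigma tau : Type} (D : sigma → (tau →₀ ℕ)) (m : sigma →₀ ℕ) (c : tau) :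
    (m.sum fun i k => k • D i) c = m.sum fun i k => k * D i c := by
  rw [Finsupp.sum_apply]
  exact Finsupp.sum_congr fun i _ => by rw [Finsupp.smul_apply, smul_eq_mul]

lemma sum_mul_indicator {sigma : Type} [DecidableEq sigma] (m : sigma →₀ ℕ) (p₀ : sigma) :
    (m.sum fun p k => k * (if p = p₀ then 1 else 0)) = m p₀ := by
  have h : ∀ p k, k * (if p = p₀ then 1 else 0) = if p = p₀ then k else 0 := by
    intro p k; split <;> simp
  rw [Finsupp.sum, Finset.sum_congr rfl (fun p _ => h p (m p)),
    Finset.sum_ite_eq' m.support p₀ fun p => m p]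
  split
  · rfl
  · exact (Finsupp.notMem_support_iff.mp (by assumption)).symm

/-- If the exponent vectors are `ℕ`-linearly independent, the kernel of the associated
monomial map is zero. -/
lemma ker_aeval_monomial {sigma tau : Type} (K : Type) [Field K] (D : sigma → (tau →₀ ℕ))
    (hL : Function.Injective fun m : sigma →₀ ℕ => m.sum fun i k => k • D i) :
    RingHom.ker (aeval (R := K) (fun i => monomial (D i) (1 : K)) :
      MvPolynomial sigma K →ₐ[K] MvPolynomial tau K) = ⊥ := by
  classical
  set L : (sigma →₀ ℕ) → (tau →₀ ℕ) := fun m => m.sum fun i k => k • D i with hLdef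
  set f : MvPolynomial sigma K →ₐ[K] MvPolynomial tau K :=
    aeval (fun i => monomial (D i) (1 : K)) with hfdef
  have key : ∀ (m : sigma →₀ ℕ) (c : K), f (monomial m c) = monomial (L m) c := by
    intro m c
    rw [hfdef, aeval_monomial]
    have h1 : (m.prod fun i k => (monomial (D i) (1 : K)) ^ k) = monomial (L m) 1 := by
      rw [Finsupp.prod, Finset.prod_congr rfl
        (fun i _ => by rw [monomial_pow, one_pow]), prod_monomial_one]
      rfl
    rw [h1, algebraMap_eq, C_mul_monomial, mul_one]
  rw [eq_bot_iff]
  intro p hp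
  rw [RingHom.mem_ker] at hp
  have hp' : f p = 0 := hp
  rw [Ideal.mem_bot]
  have hcoeff : ∀ m : sigma →₀ ℕ, coeff m p = coeff (L m) (f p) := by
    intro m
    conv_rhs => rw [p.as_sum]
    rw [map_sum, Finset.sum_congr rfl (fun m' _ => key m' (coeff m' p)), coeff_sum]
    have h2 : ∀ m' ∈ p.support,
        coeff (L m) (monomial (L m') (coeff m' p)) = if m' = m then coeff m' p else 0 := by
      intro m' _
      rw [coeff_monomial]
      congr 1
      simp only [eq_iff_iff]
      exact ⟨fun h => hL h, fun h => by rw [h]⟩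
    rw [Finset.sum_congr rfl h2, Finset.sum_ite_eq' p.support m fun m' => coeff m' p]
    split
    · rfl
    · exact MvPolynomial.notMem_support_iff.mp (by assumption)
  ext m
  rw [hcoeff m, hp']
  simp


/-- The degree-2 relation for a non-edge: `u_{x} u_{y} = u_∅ u_{x,y}`. -/
lemma relation_nonedge {V : Type} [Finite V] (K : Type) [CommRing K]
    (G : SimpleGraph V) (x y : V) (hxy : x ≠ y) (hnadj : ¬ G.Adj x y) :
    cutMonomial K G {x} * cutMonomial K G {y} =
      cutMonomial K G ∅ * cutMonomial K G ({x, y} : Set V) := by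
  unfold cutMonomial
  rw [← Finset.prod_mul_distrib, ← Finset.prod_mul_distrib]
  refine Finset.prod_congr rfl fun e he => ?_
  rw [Set.Finite.mem_toFinset] at he
  revert he
  induction e using Sym2.ind with
  | _ u v =>
    intro he
    have hadj : G.Adj u v := he
    have hne : ¬(u = x ∧ v = y) := by rintro ⟨rfl, rfl⟩; exact hnadj hadj
    have hne' : ¬(u = y ∧ v = x) := by rintro ⟨rfl, rfl⟩; exact hnadj hadj.symm
    simp only [isCutEdge_mk_iff, Set.mem_singleton_iff, Set.mem_insert_iff,
      Set.mem_empty_iff_false, false_and, and_false, or_self, if_false]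
    by_cases hux : u = x <;> by_cases huy : u = y <;>
      by_cases hvx : v = x <;> by_cases hvy : v = y <;>
      simp_all <;> ring

/-- The degree-4 relation on three distinct vertices, valid in any graph:
`u_∅ u_{ab} u_{ac} u_{bc} = u_a u_b u_c u_{abc}`. -/
lemma relation_three {V : Type} [Finite V] (K : Type) [CommRing K]
    (G : SimpleGraph V) (a b c : V) (hab : a ≠ b) (hac : a ≠ c) (hbc : b ≠ c) :
    cutMonomial K G ∅ * cutMonomial K G ({a, b} : Set V) *
        cutMonomial K G ({a, c} : Set V) * cutMonomial K G ({b, c} : Set V) =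
      cutMonomial K G {a} * cutMonomial K G {b} * cutMonomial K G {c} *
        cutMonomial K G ({a, b, c} : Set V) := by
  unfold cutMonomial
  rw [← Finset.prod_mul_distrib, ← Finset.prod_mul_distrib, ← Finset.prod_mul_distrib,
    ← Finset.prod_mul_distrib, ← Finset.prod_mul_distrib, ← Finset.prod_mul_distrib]
  refine Finset.prod_congr rfl fun e _ => ?_
  induction e using Sym2.ind with
  | _ u v =>
    simp only [isCutEdge_mk_iff, Set.mem_singleton_iff, Set.mem_insert_iff,
      Set.mem_empty_iff_false, false_and, and_false, or_self, if_false]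
    by_cases hua : u = a <;> by_cases hub : u = b <;> by_cases huc : u = c <;>
      by_cases hva : v = a <;> by_cases hvb : v = b <;> by_cases hvc : v = c <;>
      simp_all <;> ring

lemma prod2_X_ne {sigma : Type} (K : Type) [Field K] (p1 p2 q1 q2 : sigma)
    (h1 : q1 ≠ p1) (h2 : q2 ≠ p1) (h3 : p2 ≠ p1) :
    (X p1 * X p2 : MvPolynomial sigma K) ≠ X q1 * X q2 := by
  classical
  intro h
  rw [X, X, X, X, monomial_mul, monomial_mul, monomial_eq_monomial_iff] at h
  rcases h with ⟨hd, -⟩ | ⟨h0, -⟩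
  · have := congrFun (congrArg DFunLike.coe hd) p1
    simp only [Finsupp.add_apply, Finsupp.single_apply, eq_self_iff_true, if_true,
      if_neg h1, if_neg h2, if_neg h3] at this
    omega
  · simp at h0

lemma prod4_X_ne {sigma : Type} (K : Type) [Field K] (p1 p2 p3 p4 q1 q2 q3 q4 : sigma)
    (h1 : q1 ≠ p1) (h2 : q2 ≠ p1) (h3 : q3 ≠ p1) (h4 : q4 ≠ p1)
    (h5 : p2 ≠ p1) (h6 : p3 ≠ p1) (h7 : p4 ≠ p1) :
    (X p1 * X p2 * X p3 * X p4 : MvPolynomial sigma K) ≠ X q1 * X q2 * X q3 * X q4 := by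
  classical
  intro h
  rw [X, X, X, X, X, X, X, X, monomial_mul, monomial_mul, monomial_mul,
    monomial_mul, monomial_mul, monomial_mul, monomial_eq_monomial_iff] at h
  rcases h with ⟨hd, -⟩ | ⟨h0, -⟩
  · have := congrFun (congrArg DFunLike.coe hd) p1
    simp only [Finsupp.add_apply, Finsupp.single_apply, eq_self_iff_true, if_true,
      if_neg h1, if_neg h2, if_neg h3, if_neg h4, if_neg h5, if_neg h6, if_neg h7] at this
    omega
  · simp at h0


lemma L_coord_eq {sigma tau : Type} [DecidableEq sigma] (D : sigma → (tau →₀ ℕ)) (c : tau) (p₀ : sigma)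
    (hD : ∀ p, D p c = if p = p₀ then 1 else 0) (m : sigma →₀ ℕ) :
    (m.sum fun i k => k • D i) c = m p₀ := by
  rw [L_apply]
  rw [show (m.sum fun i k => k * D i c) = m.sum fun p k => k * (if p = p₀ then 1 else 0) from
    Finset.sum_congr rfl fun p _ => by dsimp only; rw [hD p]]
  exact sum_mul_indicator m p₀

lemma L_coord_pair {sigma tau : Type} [DecidableEq sigma] (D : sigma → (tau →₀ ℕ)) (c₁ c₂ c₃ : tau) (p₀ : sigma)
    (hD : ∀ p, D p c₁ + D p c₂ = 2 * (if p = p₀ then 1 else 0) + D p c₃) (m : sigma →₀ ℕ) :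
    (m.sum fun i k => k • D i) c₁ + (m.sum fun i k => k • D i) c₂ =
      2 * m p₀ + (m.sum fun i k => k • D i) c₃ := by
  rw [L_apply, L_apply, L_apply, ← sum_mul_indicator m p₀]
  unfold Finsupp.sum
  rw [← Finset.sum_add_distrib, Finset.mul_sum, ← Finset.sum_add_distrib]
  refine Finset.sum_congr rfl fun p _ => ?_
  dsimp only
  rw [← mul_add, hD p]
  ring

lemma L_coord_pair0 {sigma tau : Type} [DecidableEq sigma] (D : sigma → (tau →₀ ℕ)) (c : tau) (p₀ p₁ : sigma)
    (hD : ∀ p, D p c = (if p = p₀ then 1 else 0) + (if p = p₁ then 1 else 0)) (m : sigma →₀ ℕ) :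
    (m.sum fun i k => k • D i) c = m p₀ + m p₁ := by
  rw [L_apply, ← sum_mul_indicator m p₀, ← sum_mul_indicator m p₁]
  unfold Finsupp.sum
  rw [← Finset.sum_add_distrib]
  refine Finset.sum_congr rfl fun p _ => ?_
  dsimp only
  rw [hD p]
  ring

variable {V : Type}

lemma partition_classify2 (x y : V) (hxy : x ≠ y) (huniv : ∀ z : V, z = x ∨ z = y)
    (p : Partition V) :
    p = Quotient.mk (partitionSetoid V) (∅ : Set V) ∨
      p = Quotient.mk (partitionSetoid V) ({x} : Set V) := by
  induction p using Quotient.ind with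
  | _ A =>
    by_cases hx : x ∈ A <;> by_cases hy : y ∈ A
    · refine Or.inl (Quotient.sound (Or.inr ?_))
      ext z; rcases huniv z with rfl | rfl <;> simp [hx, hy]
    · refine Or.inr (Quotient.sound (Or.inl ?_))
      ext z; rcases huniv z with rfl | rfl <;> simp [hx, hy, hxy.symm]
    · refine Or.inr (Quotient.sound (Or.inr ?_))
      ext z; rcases huniv z with rfl | rfl <;> simp [hx, hy, hxy.symm]
    · refine Or.inl (Quotient.sound (Or.inl ?_))
      ext z; rcases huniv z with rfl | rfl <;> simp [hx, hy]

lemma partition_empty_ne_single (x y : V) (hxy : x ≠ y) :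
    Quotient.mk (partitionSetoid V) (∅ : Set V) ≠
      Quotient.mk (partitionSetoid V) ({x} : Set V) := by
  intro h
  rcases Quotient.exact h with h' | h'
  · exact absurd (h' ▸ rfl : x ∈ (∅ : Set V)) (by simp)
  · rw [Set.compl_empty] at h'
    have : y ∈ ({x} : Set V) := h' ▸ Set.mem_univ y
    exact hxy (Set.mem_singleton_iff.mp this).symm

lemma edgeSet_top_two [Fintype V] (x y : V) (hxy : x ≠ y) (huniv : ∀ z : V, z = x ∨ z = y) :
    (Set.toFinite (⊤ : SimpleGraph V).edgeSet).toFinset = {s(x, y)} := by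
  ext e
  rw [Set.Finite.mem_toFinset, Finset.mem_singleton]
  induction e using Sym2.ind with
  | _ u v =>
    rw [SimpleGraph.mem_edgeSet, SimpleGraph.top_adj, Sym2.eq_iff]
    constructor
    · intro huv
      rcases huniv u with rfl | rfl <;> rcases huniv v with rfl | rfl <;> tauto
    · rintro (⟨rfl, rfl⟩ | ⟨rfl, rfl⟩)
      · exact hxy
      · exact hxy.symm

lemma cutExpQ_coord2_false [Fintype V] (x y : V) (hxy : x ≠ y)
    (huniv : ∀ z : V, z = x ∨ z = y) (p : Partition V) :
    cutExpQ (⊤ : SimpleGraph V) p ((false, s(x, y)) : Bool × Sym2 V) =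
      if p = Quotient.mk (partitionSetoid V) (∅ : Set V) then 1 else 0 := by
  rcases partition_classify2 x y hxy huniv p with rfl | rfl
  · rw [if_pos rfl]
    show cutExp (⊤ : SimpleGraph V) ∅ _ = 1
    rw [cutExp, edgeSet_top_two x y hxy huniv, Finset.sum_singleton]
    have : ¬ IsCutEdge (∅ : Set V) s(x, y) := by
      simp [isCutEdge_mk_iff]
    simp [this, Finsupp.single_apply]
  · rw [if_neg (partition_empty_ne_single x y hxy).symm]
    show cutExp (⊤ : SimpleGraph V) {x} _ = 0
    rw [cutExp, edgeSet_top_two x y hxy huniv, Finset.sum_singleton]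
    have : IsCutEdge ({x} : Set V) s(x, y) := by
      simp [isCutEdge_mk_iff, hxy.symm]
    simp [this, Finsupp.single_apply]

lemma cutExpQ_coord2_true [Fintype V] (x y : V) (hxy : x ≠ y)
    (huniv : ∀ z : V, z = x ∨ z = y) (p : Partition V) :
    cutExpQ (⊤ : SimpleGraph V) p ((true, s(x, y)) : Bool × Sym2 V) =
      if p = Quotient.mk (partitionSetoid V) ({x} : Set V) then 1 else 0 := by
  rcases partition_classify2 x y hxy huniv p with rfl | rfl
  · rw [if_neg (partition_empty_ne_single x y hxy)]
    show cutExp (⊤ : SimpleGraph V) ∅ _ = 0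
    rw [cutExp, edgeSet_top_two x y hxy huniv, Finset.sum_singleton]
    have : ¬ IsCutEdge (∅ : Set V) s(x, y) := by
      simp [isCutEdge_mk_iff]
    simp [this, Finsupp.single_apply]
  · rw [if_pos rfl]
    show cutExp (⊤ : SimpleGraph V) {x} _ = 1
    rw [cutExp, edgeSet_top_two x y hxy huniv, Finset.sum_singleton]
    have : IsCutEdge ({x} : Set V) s(x, y) := by
      simp [isCutEdge_mk_iff, hxy.symm]
    simp [this, Finsupp.single_apply]

lemma L_injective2 [Fintype V] (x y : V) (hxy : x ≠ y) (huniv : ∀ z : V, z = x ∨ z = y) :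
    Function.Injective fun m : Partition V →₀ ℕ =>
      m.sum fun i k => k • cutExpQ (⊤ : SimpleGraph V) i := by
  intro m m' h
  ext p
  have hf := congrFun (congrArg DFunLike.coe h)
  rcases partition_classify2 x y hxy huniv p with rfl | rfl
  · have h1 := L_coord_eq (cutExpQ (⊤ : SimpleGraph V)) ((false, s(x, y)) : Bool × Sym2 V)
      _ (cutExpQ_coord2_false x y hxy huniv) m
    have h2 := L_coord_eq (cutExpQ (⊤ : SimpleGraph V)) ((false, s(x, y)) : Bool × Sym2 V)
      _ (cutExpQ_coord2_false x y hxy huniv) m'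
    rw [← h1, ← h2]
    exact hf _
  · have h1 := L_coord_eq (cutExpQ (⊤ : SimpleGraph V)) ((true, s(x, y)) : Bool × Sym2 V)
      _ (cutExpQ_coord2_true x y hxy huniv) m
    have h2 := L_coord_eq (cutExpQ (⊤ : SimpleGraph V)) ((true, s(x, y)) : Bool × Sym2 V)
      _ (cutExpQ_coord2_true x y hxy huniv) m'
    rw [← h1, ← h2]
    exact hf _


lemma partition_single_ne {V : Type} (x y w : V) (hxy : x ≠ y) (hwx : w ≠ x) (hwy : w ≠ y) :
    Quotient.mk (partitionSetoid V) ({x} : Set V) ≠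
      Quotient.mk (partitionSetoid V) ({y} : Set V) := by
  intro h
  rcases Quotient.exact h with h' | h'
  · exact hxy (Set.mem_singleton_iff.mp (h' ▸ rfl : y ∈ ({x} : Set V))).symm
  · have : w ∈ ({y} : Set V) := h' ▸ (fun hw => hwx (Set.mem_singleton_iff.mp hw))
    exact hwy (Set.mem_singleton_iff.mp this)

lemma partition_classify3 {V : Type} (x y z : V) (hxy : x ≠ y) (hxz : x ≠ z) (hyz : y ≠ z)
    (huniv : ∀ w : V, w = x ∨ w = y ∨ w = z) (p : Partition V) :
    p = Quotient.mk (partitionSetoid V) (∅ : Set V) ∨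
      p = Quotient.mk (partitionSetoid V) ({x} : Set V) ∨
      p = Quotient.mk (partitionSetoid V) ({y} : Set V) ∨
      p = Quotient.mk (partitionSetoid V) ({z} : Set V) := by
  induction p using Quotient.ind with
  | _ A =>
    by_cases hx : x ∈ A <;> by_cases hy : y ∈ A <;> by_cases hz : z ∈ A
    · refine Or.inl (Quotient.sound (Or.inr ?_))
      ext w; rcases huniv w with rfl | rfl | rfl <;>
        simp [hx, hy, hz, hxy, hxz, hyz, Ne.symm hxy, Ne.symm hxz, Ne.symm hyz]
    · refine Or.inr (Or.inr (Or.inr (Quotient.sound (Or.inr ?_))))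
      ext w; rcases huniv w with rfl | rfl | rfl <;>
        simp [hx, hy, hz, hxy, hxz, hyz, Ne.symm hxy, Ne.symm hxz, Ne.symm hyz]
    · refine Or.inr (Or.inr (Or.inl (Quotient.sound (Or.inr ?_))))
      ext w; rcases huniv w with rfl | rfl | rfl <;>
        simp [hx, hy, hz, hxy, hxz, hyz, Ne.symm hxy, Ne.symm hxz, Ne.symm hyz]
    · refine Or.inr (Or.inl (Quotient.sound (Or.inl ?_)))
      ext w; rcases huniv w with rfl | rfl | rfl <;>
        simp [hx, hy, hz, hxy, hxz, hyz, Ne.symm hxy, Ne.symm hxz, Ne.symm hyz]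
    · refine Or.inr (Or.inl (Quotient.sound (Or.inr ?_)))
      ext w; rcases huniv w with rfl | rfl | rfl <;>
        simp [hx, hy, hz, hxy, hxz, hyz, Ne.symm hxy, Ne.symm hxz, Ne.symm hyz]
    · refine Or.inr (Or.inr (Or.inl (Quotient.sound (Or.inl ?_))))
      ext w; rcases huniv w with rfl | rfl | rfl <;>
        simp [hx, hy, hz, hxy, hxz, hyz, Ne.symm hxy, Ne.symm hxz, Ne.symm hyz]
    · refine Or.inr (Or.inr (Or.inr (Quotient.sound (Or.inl ?_))))
      ext w; rcases huniv w with rfl | rfl | rfl <;>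
        simp [hx, hy, hz, hxy, hxz, hyz, Ne.symm hxy, Ne.symm hxz, Ne.symm hyz]
    · refine Or.inl (Quotient.sound (Or.inl ?_))
      ext w; rcases huniv w with rfl | rfl | rfl <;>
        simp [hx, hy, hz, hxy, hxz, hyz, Ne.symm hxy, Ne.symm hxz, Ne.symm hyz]

lemma sym2_ne_of_ne {V : Type} (x y z : V) (hyz : y ≠ z) (hxz : x ≠ z) :
    s(x, y) ≠ s(x, z) := by
  rw [Ne, Sym2.eq_iff]
  push_neg
  exact ⟨fun _ => hyz, fun h => absurd h hxz⟩

lemma edgeSet_top_three {V : Type} [Fintype V] (x y z : V) (hxy : x ≠ y) (hxz : x ≠ z)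
    (hyz : y ≠ z) (huniv : ∀ w : V, w = x ∨ w = y ∨ w = z) :
    (Set.toFinite (⊤ : SimpleGraph V).edgeSet).toFinset =
      {s(x, y), s(x, z), s(y, z)} := by
  ext e
  rw [Set.Finite.mem_toFinset]
  induction e using Sym2.ind with
  | _ u v =>
    rw [SimpleGraph.mem_edgeSet, SimpleGraph.top_adj, Finset.mem_insert, Finset.mem_insert,
      Finset.mem_singleton, Sym2.eq_iff, Sym2.eq_iff, Sym2.eq_iff]
    constructor
    · intro huv
      rcases huniv u with rfl | rfl | rfl <;> rcases huniv v with rfl | rfl | rfl <;> tauto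
    · rintro ((⟨rfl, rfl⟩ | ⟨rfl, rfl⟩) | (⟨rfl, rfl⟩ | ⟨rfl, rfl⟩) | (⟨rfl, rfl⟩ | ⟨rfl, rfl⟩)) <;>
        first
        | exact hxy | exact hxy.symm | exact hxz | exact hxz.symm
        | exact hyz | exact hyz.symm

lemma cutExp_top_three {V : Type} [Fintype V] (x y z : V) (hxy : x ≠ y) (hxz : x ≠ z)
    (hyz : y ≠ z) (huniv : ∀ w : V, w = x ∨ w = y ∨ w = z) (A : Set V) :
    cutExp (⊤ : SimpleGraph V) A =
      Finsupp.single ((if IsCutEdge A s(x, y) then true else false), s(x, y)) 1 +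
      Finsupp.single ((if IsCutEdge A s(x, z) then true else false), s(x, z)) 1 +
      Finsupp.single ((if IsCutEdge A s(y, z) then true else false), s(y, z)) 1 := by
  have h12 : s(x, y) ≠ s(x, z) := sym2_ne_of_ne x y z hyz hxz
  have h13 : s(x, y) ≠ s(y, z) := by
    rw [Ne, Sym2.eq_iff]
    rintro (⟨h, -⟩ | ⟨h, -⟩)
    exacts [hxy h, hxz h]
  have h23 : s(x, z) ≠ s(y, z) := by
    rw [Ne, Sym2.eq_iff]
    rintro (⟨h, -⟩ | ⟨h, -⟩)
    exacts [hxy h, hxz h]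
  rw [cutExp, edgeSet_top_three x y z hxy hxz hyz huniv,
    Finset.sum_insert (by simp [h12, h13]), Finset.sum_insert (by simp [h23]),
    Finset.sum_singleton, add_assoc]


section CardThree

variable {V : Type} [Fintype V] (x y z : V)

/-- The table of exponent vectors for `K₃`. -/
lemma cutExp_top3_empty (hxy : x ≠ y) (hxz : x ≠ z) (hyz : y ≠ z)
    (huniv : ∀ w : V, w = x ∨ w = y ∨ w = z) :
    cutExp (⊤ : SimpleGraph V) (∅ : Set V) =
      Finsupp.single ((false, s(x, y)) : Bool × Sym2 V) 1 +
      Finsupp.single ((false, s(x, z)) : Bool × Sym2 V) 1 +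
      Finsupp.single ((false, s(y, z)) : Bool × Sym2 V) 1 := by
  rw [cutExp_top_three x y z hxy hxz hyz huniv]
  simp [isCutEdge_mk_iff]

lemma cutExp_top3_x (hxy : x ≠ y) (hxz : x ≠ z) (hyz : y ≠ z)
    (huniv : ∀ w : V, w = x ∨ w = y ∨ w = z) :
    cutExp (⊤ : SimpleGraph V) ({x} : Set V) =
      Finsupp.single ((true, s(x, y)) : Bool × Sym2 V) 1 +
      Finsupp.single ((true, s(x, z)) : Bool × Sym2 V) 1 +
      Finsupp.single ((false, s(y, z)) : Bool × Sym2 V) 1 := by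
  rw [cutExp_top_three x y z hxy hxz hyz huniv]
  simp [isCutEdge_mk_iff, Set.mem_singleton_iff, hxy, hxz, hyz,
    Ne.symm hxy, Ne.symm hxz, Ne.symm hyz]

lemma cutExp_top3_y (hxy : x ≠ y) (hxz : x ≠ z) (hyz : y ≠ z)
    (huniv : ∀ w : V, w = x ∨ w = y ∨ w = z) :
    cutExp (⊤ : SimpleGraph V) ({y} : Set V) =
      Finsupp.single ((true, s(x, y)) : Bool × Sym2 V) 1 +
      Finsupp.single ((false, s(x, z)) : Bool × Sym2 V) 1 +
      Finsupp.single ((true, s(y, z)) : Bool × Sym2 V) 1 := by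
  rw [cutExp_top_three x y z hxy hxz hyz huniv]
  simp [isCutEdge_mk_iff, Set.mem_singleton_iff, hxy, hxz, hyz,
    Ne.symm hxy, Ne.symm hxz, Ne.symm hyz]

lemma cutExp_top3_z (hxy : x ≠ y) (hxz : x ≠ z) (hyz : y ≠ z)
    (huniv : ∀ w : V, w = x ∨ w = y ∨ w = z) :
    cutExp (⊤ : SimpleGraph V) ({z} : Set V) =
      Finsupp.single ((false, s(x, y)) : Bool × Sym2 V) 1 +
      Finsupp.single ((true, s(x, z)) : Bool × Sym2 V) 1 +
      Finsupp.single ((true, s(y, z)) : Bool × Sym2 V) 1 := by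
  rw [cutExp_top_three x y z hxy hxz hyz huniv]
  simp [isCutEdge_mk_iff, Set.mem_singleton_iff, hxy, hxz, hyz,
    Ne.symm hxy, Ne.symm hxz, Ne.symm hyz]

lemma L_injective3 (hxy : x ≠ y) (hxz : x ≠ z) (hyz : y ≠ z)
    (huniv : ∀ w : V, w = x ∨ w = y ∨ w = z) :
    Function.Injective fun m : Partition V →₀ ℕ =>
      m.sum fun i k => k • cutExpQ (⊤ : SimpleGraph V) i := by
  have h12 : s(x, y) ≠ s(x, z) := sym2_ne_of_ne x y z hyz hxz
  have h13 : s(x, y) ≠ s(y, z) := by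
    rw [Ne, Sym2.eq_iff]
    rintro (⟨h, -⟩ | ⟨h, -⟩)
    exacts [hxy h, hxz h]
  have h23 : s(x, z) ≠ s(y, z) := by
    rw [Ne, Sym2.eq_iff]
    rintro (⟨h, -⟩ | ⟨h, -⟩)
    exacts [hxy h, hxz h]
  set D := cutExpQ (⊤ : SimpleGraph V) with hD
  set pe := Quotient.mk (partitionSetoid V) (∅ : Set V) with hpe
  set px := Quotient.mk (partitionSetoid V) ({x} : Set V) with hpx
  set py := Quotient.mk (partitionSetoid V) ({y} : Set V) with hpy
  set pz := Quotient.mk (partitionSetoid V) ({z} : Set V) with hpz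
  have hex : pe ≠ px := partition_empty_ne_single x y hxy
  have hey : pe ≠ py := partition_empty_ne_single y x hxy.symm
  have hez : pe ≠ pz := partition_empty_ne_single z x hxz.symm
  have hxy' : px ≠ py := partition_single_ne x y z hxy hxz.symm hyz.symm
  have hxz' : px ≠ pz := partition_single_ne x z y hxz hxy.symm hyz
  have hyz' : py ≠ pz := partition_single_ne y z x hyz hxy hxz
  have hDe : D pe = cutExp (⊤ : SimpleGraph V) (∅ : Set V) := rfl
  have hDx : D px = cutExp (⊤ : SimpleGraph V) ({x} : Set V) := rfl
  have hDy : D py = cutExp (⊤ : SimpleGraph V) ({y} : Set V) := rfl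
  have hDz : D pz = cutExp (⊤ : SimpleGraph V) ({z} : Set V) := rfl
  have table : ∀ p, p = pe ∨ p = px ∨ p = py ∨ p = pz := fun p => partition_classify3 x y z hxy hxz hyz huniv p
  have key_x : ∀ p, D p ((true, s(x, y)) : Bool × Sym2 V) + D p ((true, s(x, z)) : Bool × Sym2 V)
      = 2 * (if p = px then 1 else 0) + D p ((true, s(y, z)) : Bool × Sym2 V) := by
    intro p
    rcases table p with rfl | rfl | rfl | rfl <;>
      simp only [hDe, hDx, hDy, hDz,
        cutExp_top3_empty x y z hxy hxz hyz huniv, cutExp_top3_x x y z hxy hxz hyz huniv,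
        cutExp_top3_y x y z hxy hxz hyz huniv, cutExp_top3_z x y z hxy hxz hyz huniv] <;>
      simp [Finsupp.single_apply, Prod.mk.injEq, ← hpe, ← hpx, ← hpy, ← hpz, h12, h13, h23,
        Ne.symm h12, Ne.symm h13, Ne.symm h23, hex, hey, hez, hex.symm, hey.symm, hez.symm,
        hxy', hxz', hyz', Ne.symm hxy', Ne.symm hxz', Ne.symm hyz']
  have key_y : ∀ p, D p ((true, s(x, y)) : Bool × Sym2 V) + D p ((true, s(y, z)) : Bool × Sym2 V)
      = 2 * (if p = py then 1 else 0) + D p ((true, s(x, z)) : Bool × Sym2 V) := by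
    intro p
    rcases table p with rfl | rfl | rfl | rfl <;>
      simp only [hDe, hDx, hDy, hDz,
        cutExp_top3_empty x y z hxy hxz hyz huniv, cutExp_top3_x x y z hxy hxz hyz huniv,
        cutExp_top3_y x y z hxy hxz hyz huniv, cutExp_top3_z x y z hxy hxz hyz huniv] <;>
      simp [Finsupp.single_apply, Prod.mk.injEq, ← hpe, ← hpx, ← hpy, ← hpz, h12, h13, h23,
        Ne.symm h12, Ne.symm h13, Ne.symm h23, hex, hey, hez, hex.symm, hey.symm, hez.symm,
        hxy', hxz', hyz', Ne.symm hxy', Ne.symm hxz', Ne.symm hyz']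
  have key_z : ∀ p, D p ((true, s(x, z)) : Bool × Sym2 V) + D p ((true, s(y, z)) : Bool × Sym2 V)
      = 2 * (if p = pz then 1 else 0) + D p ((true, s(x, y)) : Bool × Sym2 V) := by
    intro p
    rcases table p with rfl | rfl | rfl | rfl <;>
      simp only [hDe, hDx, hDy, hDz,
        cutExp_top3_empty x y z hxy hxz hyz huniv, cutExp_top3_x x y z hxy hxz hyz huniv,
        cutExp_top3_y x y z hxy hxz hyz huniv, cutExp_top3_z x y z hxy hxz hyz huniv] <;>
      simp [Finsupp.single_apply, Prod.mk.injEq, ← hpe, ← hpx, ← hpy, ← hpz, h12, h13, h23,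
        Ne.symm h12, Ne.symm h13, Ne.symm h23, hex, hey, hez, hex.symm, hey.symm, hez.symm,
        hxy', hxz', hyz', Ne.symm hxy', Ne.symm hxz', Ne.symm hyz']
  have key_e : ∀ p, D p ((false, s(x, y)) : Bool × Sym2 V)
      = (if p = pe then 1 else 0) + (if p = pz then 1 else 0) := by
    intro p
    rcases table p with rfl | rfl | rfl | rfl <;>
      simp only [hDe, hDx, hDy, hDz,
        cutExp_top3_empty x y z hxy hxz hyz huniv, cutExp_top3_x x y z hxy hxz hyz huniv,
        cutExp_top3_y x y z hxy hxz hyz huniv, cutExp_top3_z x y z hxy hxz hyz huniv] <;>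
      simp [Finsupp.single_apply, Prod.mk.injEq, ← hpe, ← hpx, ← hpy, ← hpz, h12, h13, h23,
        Ne.symm h12, Ne.symm h13, Ne.symm h23, hex, hey, hez, hex.symm, hey.symm, hez.symm,
        hxy', hxz', hyz', Ne.symm hxy', Ne.symm hxz', Ne.symm hyz']
  intro m m' h
  have hc : ∀ c, (m.sum fun i k => k • D i) c = (m'.sum fun i k => k • D i) c :=
    fun c => congrFun (congrArg DFunLike.coe h) c
  have recx : m px = m' px := by
    have h1 := L_coord_pair D _ _ _ px key_x m
    have h2 := L_coord_pair D _ _ _ px key_x m'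
    rw [hc _, hc _, hc _] at h1
    rw [h2] at h1
    omega
  have recy : m py = m' py := by
    have h1 := L_coord_pair D _ _ _ py key_y m
    have h2 := L_coord_pair D _ _ _ py key_y m'
    rw [hc _, hc _, hc _] at h1
    rw [h2] at h1
    omega
  have recz : m pz = m' pz := by
    have h1 := L_coord_pair D _ _ _ pz key_z m
    have h2 := L_coord_pair D _ _ _ pz key_z m'
    rw [hc _, hc _, hc _] at h1
    rw [h2] at h1
    omega
  have rece : m pe = m' pe := by
    have h1 := L_coord_pair0 D _ pe pz key_e m
    have h2 := L_coord_pair0 D _ pe pz key_e m'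
    rw [hc _] at h1
    rw [h2] at h1
    omega
  ext p
  rcases table p with rfl | rfl | rfl | rfl
  exacts [rece, recx, recy, recz]

end CardThree

lemma partition_mk_ne_empty {V : Type} (S : Set V) (hS : S.Nonempty) (hSc : Sᶜ.Nonempty) :
    Quotient.mk (partitionSetoid V) S ≠ Quotient.mk (partitionSetoid V) (∅ : Set V) := by
  intro h
  rcases Quotient.exact h with h' | h'
  · rcases hS with ⟨s, hs⟩; rw [← h'] at hs; exact hs
  · rcases hSc with ⟨s, hs⟩; rw [← h'] at hs; exact hs

theorem stmt0 {V : Type} [Fintype V] [Nonempty V] (K : Type) [Field K]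
    (G : SimpleGraph V) (hE : G.edgeSet.Nonempty) :
    cutIdeal K G = ⊥ ↔
      G = ⊤ ∧ (Fintype.card V = 2 ∨ Fintype.card V = 3) := by
  constructor
  · intro hbot
    -- `V` has at least two vertices
    have hcard2 : 2 ≤ Fintype.card V := by
      obtain ⟨e, he⟩ := hE
      revert he
      induction e using Sym2.ind with
      | _ u v =>
        intro he
        have hadj : G.Adj u v := he
        exact Fintype.one_lt_card_iff.mpr ⟨u, v, hadj.ne⟩
    -- `V` has at most three vertices
    have hcard3 : Fintype.card V ≤ 3 := by
      by_contra hc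
      push_neg at hc
      obtain ⟨f⟩ := Function.Embedding.nonempty_of_card_le
        (by rw [Fintype.card_fin]; omega : Fintype.card (Fin 4) ≤ Fintype.card V)
      set a := f 0; set b := f 1; set c := f 2; set d := f 3
      have hab : a ≠ b := fun h => absurd (f.injective h) (by decide)
      have hac : a ≠ c := fun h => absurd (f.injective h) (by decide)
      have hbc : b ≠ c := fun h => absurd (f.injective h) (by decide)
      have hda : d ≠ a := fun h => absurd (f.injective h) (by decide)
      have hdb : d ≠ b := fun h => absurd (f.injective h) (by decide)
      have hdc : d ≠ c := fun h => absurd (f.injective h) (by decide)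
      have hrel := relation_three K G a b c hab hac hbc
      have hphi : phi K G (qPart K (∅ : Set V) * qPart K {a, b} * qPart K {a, c} *
          qPart K {b, c} - qPart K {a} * qPart K {b} * qPart K {c} * qPart K {a, b, c}) = 0 := by
        rw [map_sub, map_mul, map_mul, map_mul, map_mul, map_mul, map_mul,
          phi_qPart, phi_qPart, phi_qPart, phi_qPart, phi_qPart, phi_qPart,
          phi_qPart, phi_qPart, hrel, sub_self]
      have hker : (qPart K (∅ : Set V) * qPart K {a, b} * qPart K {a, c} * qPart K {b, c} -
          qPart K {a} * qPart K {b} * qPart K {c} * qPart K {a, b, c}) ∈ cutIdeal K G :=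
        RingHom.mem_ker.mpr hphi
      rw [hbot, Ideal.mem_bot, sub_eq_zero] at hker
      simp only [qPart] at hker
      refine prod4_X_ne K (Quotient.mk (partitionSetoid V) (∅ : Set V)) _ _ _ _ _ _ _
        ?_ ?_ ?_ ?_ ?_ ?_ ?_ hker
      · exact partition_mk_ne_empty _ ⟨a, by simp⟩ ⟨d, by simp [hda]⟩
      · exact partition_mk_ne_empty _ ⟨b, by simp⟩ ⟨d, by simp [hdb]⟩
      · exact partition_mk_ne_empty _ ⟨c, by simp⟩ ⟨d, by simp [hdc]⟩
      · exact partition_mk_ne_empty _ ⟨a, by simp⟩ ⟨d, by simp [hda, hdb, hdc]⟩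
      · exact partition_mk_ne_empty _ ⟨a, by simp⟩ ⟨d, by simp [hda, hdb]⟩
      · exact partition_mk_ne_empty _ ⟨a, by simp⟩ ⟨d, by simp [hda, hdc]⟩
      · exact partition_mk_ne_empty _ ⟨b, by simp⟩ ⟨d, by simp [hdb, hdc]⟩
    have htop : G = ⊤ := by
      ext u v
      rw [SimpleGraph.top_adj]
      refine ⟨fun h => h.ne, fun hne => ?_⟩
      by_contra hn
      have hcompl : ({u, v}ᶜ : Set V).Nonempty := by
        by_contra hcc
        rw [Set.not_nonempty_iff_eq_empty, Set.compl_empty_iff] at hcc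
        obtain ⟨e, he⟩ := hE
        revert he
        induction e using Sym2.ind with
        | _ p q =>
          intro he
          have hadj : G.Adj p q := he
          have hp : p = u ∨ p = v := by
            have := Set.eq_univ_iff_forall.mp hcc p; simpa using this
          have hq : q = u ∨ q = v := by
            have := Set.eq_univ_iff_forall.mp hcc q; simpa using this
          rcases hp with rfl | rfl <;> rcases hq with rfl | rfl
          · exact hadj.ne rfl
          · exact hn hadj
          · exact hn hadj.symm
          · exact hadj.ne rfl
      have hrel := relation_nonedge K G u v hne hn
      have hphi : phi K G (qPart K ({u} : Set V) * qPart K {v} -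
          qPart K (∅ : Set V) * qPart K {u, v}) = 0 := by
        rw [map_sub, map_mul, map_mul, phi_qPart, phi_qPart, phi_qPart, phi_qPart,
          hrel, sub_self]
      have hker : (qPart K ({u} : Set V) * qPart K {v} -
          qPart K (∅ : Set V) * qPart K {u, v}) ∈ cutIdeal K G :=
        RingHom.mem_ker.mpr hphi
      rw [hbot, Ideal.mem_bot, sub_eq_zero] at hker
      simp only [qPart] at hker
      refine prod2_X_ne K (Quotient.mk (partitionSetoid V) (∅ : Set V)) _ _ _
        ?_ ?_ ?_ hker.symm
      · exact partition_mk_ne_empty _ ⟨u, by simp⟩ ⟨v, by simp [hne.symm]⟩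
      · exact partition_mk_ne_empty _ ⟨v, by simp⟩ ⟨u, by simp [hne]⟩
      · exact partition_mk_ne_empty _ ⟨u, by simp⟩ hcompl
    exact ⟨htop, by omega⟩
  · rintro ⟨rfl, hcard | hcard⟩
    · have h2 : (Finset.univ : Finset V).card = 2 := hcard
      obtain ⟨x, y, hxy, huv⟩ := Finset.card_eq_two.mp h2
      have huniv : ∀ z : V, z = x ∨ z = y := by
        intro z
        have hz := Finset.mem_univ z
        rw [huv, Finset.mem_insert, Finset.mem_singleton] at hz
        exact hz
      show RingHom.ker (phi K ⊤) = ⊥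
      rw [phi_eq_aeval_monomial]
      exact ker_aeval_monomial K (cutExpQ (⊤ : SimpleGraph V)) (L_injective2 x y hxy huniv)
    · have h3 : (Finset.univ : Finset V).card = 3 := hcard
      obtain ⟨x, y, z, hxy, hxz, hyz, huv⟩ := Finset.card_eq_three.mp h3
      have huniv : ∀ w : V, w = x ∨ w = y ∨ w = z := by
        intro w
        have hw := Finset.mem_univ w
        rw [huv, Finset.mem_insert, Finset.mem_insert, Finset.mem_singleton] at hw
        exact hw
      show RingHom.ker (phi K ⊤) = ⊥
      rw [phi_eq_aeval_monomial]
      exact ker_aeval_monomial K (cutExpQ (⊤ : SimpleGraph V))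
        (L_injective3 x y z hxy hxz hyz huniv)

end CutPaper
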